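/- In the Artin braid group B_4, the braid of the complete regeneration of a 2-point of type (A) (three cusps followed by a branch point) satisfies [(σ_3^{−1} σ_2³ σ_3) · σ_2³ · (σ_3 σ_2³ σ_3^{−1})] · [(σ_2 σ_3² σ_2)^{−1} σ_1 (σ_2 σ_3² σ_2)] = σ_2 σ_3² σ_2 σ_1 σ_3 σ_2 σ_3² σ_2. -/

import Mathlib

/-- The braid relations among `m` Artin generators `σ_1, …, σ_m`, where the
generator `σ_{k+1}` is represented by the index `k : Fin m`:
`σ_i σ_{i+1} σ_i = σ_{i+1} σ_i σ_{i+1}` and `σ_i σ_j = σ_j σ_i` for `|i - j| ≥ 2`. -/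
def braidRels (m : ℕ) : Set (FreeGroup (Fin m)) :=
  { r | (∃ i j : Fin m, (i : ℕ) + 1 = (j : ℕ) ∧
          r = FreeGroup.of i * FreeGroup.of j * FreeGroup.of i *
              (FreeGroup.of j * FreeGroup.of i * FreeGroup.of j)⁻¹) ∨
        (∃ i j : Fin m, (i : ℕ) + 2 ≤ (j : ℕ) ∧
          r = FreeGroup.of i * FreeGroup.of j * (FreeGroup.of i)⁻¹ * (FreeGroup.of j)⁻¹) }

/-- The Artin braid group `B_n` on `n` strands, presented by the generators
`σ_1, …, σ_{n-1}` subject to the braid relations. -/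
def BraidGroup (n : ℕ) : Type := PresentedGroup (braidRels (n - 1))

instance (n : ℕ) : Group (BraidGroup n) :=
  inferInstanceAs (Group (PresentedGroup (braidRels (n - 1))))

/-- The Artin generator `σ_k` of the braid group `B_n`, defined for `1 ≤ k ≤ n - 1`
(with junk value `1` for indices out of range). -/
def σ (n : ℕ) (k : ℕ) : BraidGroup n :=
  if h : 1 ≤ k ∧ k ≤ n - 1 then
    (PresentedGroup.of (⟨k - 1, by omega⟩ : Fin (n - 1)) : PresentedGroup (braidRels (n - 1)))
  else 1

lemma braid_rel_one {m : ℕ} {r : FreeGroup (Fin m)} (hr : r ∈ braidRels m) :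
    (QuotientGroup.mk r : PresentedGroup (braidRels m)) = 1 :=
  (QuotientGroup.eq_one_iff r).mpr (Subgroup.subset_normalClosure hr)

lemma of_braid {m : ℕ} (i j : Fin m) (h : (i : ℕ) + 1 = (j : ℕ)) :
    (PresentedGroup.of i * PresentedGroup.of j * PresentedGroup.of i :
      PresentedGroup (braidRels m)) =
    PresentedGroup.of j * PresentedGroup.of i * PresentedGroup.of j := by
  have h1 : (QuotientGroup.mk (FreeGroup.of i * FreeGroup.of j * FreeGroup.of i *
      (FreeGroup.of j * FreeGroup.of i * FreeGroup.of j)⁻¹) :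
      PresentedGroup (braidRels m)) = 1 :=
    braid_rel_one (Or.inl ⟨i, j, h, rfl⟩)
  have h2 : (PresentedGroup.of i * PresentedGroup.of j * PresentedGroup.of i *
      (PresentedGroup.of j * PresentedGroup.of i * PresentedGroup.of j)⁻¹ :
      PresentedGroup (braidRels m)) = 1 := h1
  rw [mul_inv_eq_one] at h2
  exact h2

lemma of_comm {m : ℕ} (i j : Fin m) (h : (i : ℕ) + 2 ≤ (j : ℕ)) :
    (PresentedGroup.of i * PresentedGroup.of j : PresentedGroup (braidRels m)) =
    PresentedGroup.of j * PresentedGroup.of i := by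
  have h1 : (QuotientGroup.mk (FreeGroup.of i * FreeGroup.of j *
      (FreeGroup.of i)⁻¹ * (FreeGroup.of j)⁻¹) :
      PresentedGroup (braidRels m)) = 1 :=
    braid_rel_one (Or.inr ⟨i, j, h, rfl⟩)
  have h2 : (PresentedGroup.of i * PresentedGroup.of j *
      (PresentedGroup.of i)⁻¹ * (PresentedGroup.of j)⁻¹ :
      PresentedGroup (braidRels m)) = 1 := h1
  group at h2
  -- fall back to manual manipulation
  have : (PresentedGroup.of i * PresentedGroup.of j : PresentedGroup (braidRels m)) *
      ((PresentedGroup.of i)⁻¹ * (PresentedGroup.of j)⁻¹) = 1 := by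
    rw [← mul_assoc]; exact h1
  calc (PresentedGroup.of i * PresentedGroup.of j : PresentedGroup (braidRels m))
      = (PresentedGroup.of i * PresentedGroup.of j) *
        (((PresentedGroup.of i)⁻¹ * (PresentedGroup.of j)⁻¹) *
         (PresentedGroup.of j * PresentedGroup.of i)) := by group
    _ = PresentedGroup.of j * PresentedGroup.of i := by
        rw [← mul_assoc, this, one_mul]

/-- In `B_4`, the braid of the complete regeneration of a 2-point of type (A):
`[(σ₃⁻¹ σ₂³ σ₃) σ₂³ (σ₃ σ₂³ σ₃⁻¹)] [(σ₂ σ₃² σ₂)⁻¹ σ₁ (σ₂ σ₃² σ₂)]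
  = σ₂ σ₃² σ₂ σ₁ σ₃ σ₂ σ₃² σ₂`. -/
theorem two_point_type_A_braid :
    (((σ 4 3)⁻¹ * σ 4 2 ^ 3 * σ 4 3) * σ 4 2 ^ 3 * (σ 4 3 * σ 4 2 ^ 3 * (σ 4 3)⁻¹)) *
        ((σ 4 2 * σ 4 3 ^ 2 * σ 4 2)⁻¹ * σ 4 1 * (σ 4 2 * σ 4 3 ^ 2 * σ 4 2)) =
      σ 4 2 * σ 4 3 ^ 2 * σ 4 2 * σ 4 1 * σ 4 3 * σ 4 2 * σ 4 3 ^ 2 * σ 4 2 := by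
  have e1 : σ 4 1 = (PresentedGroup.of (0 : Fin 3) : PresentedGroup (braidRels 3)) := by
    simp [σ]
    rfl
  have e2 : σ 4 2 = (PresentedGroup.of (1 : Fin 3) : PresentedGroup (braidRels 3)) := by
    simp [σ]
    rfl
  have e3 : σ 4 3 = (PresentedGroup.of (2 : Fin 3) : PresentedGroup (braidRels 3)) := by
    simp [σ]
    rfl
  set a : BraidGroup 4 := σ 4 2 with ha
  set b : BraidGroup 4 := σ 4 3 with hb
  set c : BraidGroup 4 := σ 4 1 with hc
  have h1 : a * b * a = b * a * b := by
    rw [e2, e3]; exact of_braid 1 2 rfl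
  have h2 : c * b = b * c := by
    rw [e1, e3]; exact of_comm 0 2 (by norm_num)
  have hp2 : ∀ x : BraidGroup 4, x ^ 2 = x * x := fun x => by
    rw [pow_succ, pow_one]
  have hp3 : ∀ x : BraidGroup 4, x ^ 3 = x * x * x := fun x => by
    rw [pow_succ, pow_succ, pow_one]
  simp only [hp2, hp3]
  have hcb : b⁻¹ * a * b = a * b * a⁻¹ := by
    calc b⁻¹ * a * b = b⁻¹ * (a * b * a) * a⁻¹ := by group
      _ = b⁻¹ * (b * a * b) * a⁻¹ := by rw [h1]
      _ = a * b * a⁻¹ := by group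
  have hbc : b * a * b⁻¹ = a⁻¹ * b * a := by
    calc b * a * b⁻¹ = a⁻¹ * (a * b * a) * b⁻¹ := by group
      _ = a⁻¹ * (b * a * b) * b⁻¹ := by rw [h1]
      _ = a⁻¹ * b * a := by group
  have hcb3 : b⁻¹ * (a * a * a) * b = a * (b * b * b) * a⁻¹ := by
    calc b⁻¹ * (a * a * a) * b
        = (b⁻¹ * a * b) * (b⁻¹ * a * b) * (b⁻¹ * a * b) := by group
      _ = (a * b * a⁻¹) * (a * b * a⁻¹) * (a * b * a⁻¹) := by rw [hcb]
      _ = a * (b * b * b) * a⁻¹ := by group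
  have hbc3 : b * (a * a * a) * b⁻¹ = a⁻¹ * (b * b * b) * a := by
    calc b * (a * a * a) * b⁻¹
        = (b * a * b⁻¹) * (b * a * b⁻¹) * (b * a * b⁻¹) := by group
      _ = (a⁻¹ * b * a) * (a⁻¹ * b * a) * (a⁻¹ * b * a) := by rw [hbc]
      _ = a⁻¹ * (b * b * b) * a := by group
  have key : (b⁻¹ * (a * a * a) * b) * (a * a * a) * (b * (a * a * a) * b⁻¹) =
      (a * (b * b) * a) * b * (a * (b * b) * a) := by
    rw [hcb3, hbc3]
    calc (a * (b * b * b) * a⁻¹) * (a * a * a) * (a⁻¹ * (b * b * b) * a)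
        = a * (b * b) * (b * a * b) * (b * b) * a := by group
      _ = a * (b * b) * (a * b * a) * (b * b) * a := by rw [h1]
      _ = (a * (b * b) * a) * b * (a * (b * b) * a) := by group
  calc ((b⁻¹ * (a * a * a) * b) * (a * a * a) * (b * (a * a * a) * b⁻¹)) *
        ((a * (b * b) * a)⁻¹ * c * (a * (b * b) * a))
      = ((a * (b * b) * a) * b * (a * (b * b) * a)) *
        ((a * (b * b) * a)⁻¹ * c * (a * (b * b) * a)) := by rw [key]
    _ = (a * (b * b) * a) * (b * c) * (a * (b * b) * a) := by group
    _ = (a * (b * b) * a) * (c * b) * (a * (b * b) * a) := by rw [← h2]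
    _ = a * (b * b) * a * c * b * a * (b * b) * a := by group
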